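/- The retraction $\phi_{n,0}=T_{n,1}\circ\cdots\circ T_{n,c(n)}:D_n\to M_n$ equals the restriction $\phi_n|_{D_n}$ of $\phi_n=(r_n|_{M_n})^{-1}\circ T_{s_n}\circ r_n$ to $D_n$. -/

import Mathlib

open Set

noncomputable section

variable {Γ : Type*} [TopologicalSpace Γ] [DiscreteTopology Γ]

/-- `ℓ∞(Γ)`: the Banach space of bounded real functions on `Γ`
(carrying the discrete topology, so that boundedness is the only constraint). -/
abbrev Linf (Γ : Type*) [TopologicalSpace Γ] [DiscreteTopology Γ] : Type _ :=
  BoundedContinuousFunction Γ ℝ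

/-- The entire part of a real number, toward `0`: `[r] = sign(r)⌊|r|⌋`. -/
def ent (r : ℝ) : ℝ := Real.sign r * ⌊|r|⌋

lemma abs_ent_le (r : ℝ) : |ent r| ≤ |r| := by
  have hsign : |Real.sign r| ≤ 1 := by
    rcases lt_trichotomy r 0 with h | h | h
    · rw [Real.sign_of_neg h]; norm_num
    · rw [h, Real.sign_zero]; norm_num
    · rw [Real.sign_of_pos h]; norm_num
  have hfl : |(⌊|r|⌋ : ℝ)| ≤ |r| := by
    rw [abs_of_nonneg (by exact_mod_cast Int.floor_nonneg.mpr (abs_nonneg r))]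
    exact Int.floor_le _
  calc |ent r| = |Real.sign r| * |(⌊|r|⌋ : ℝ)| := abs_mul _ _
    _ ≤ 1 * |r| := mul_le_mul hsign hfl (abs_nonneg _) zero_le_one
    _ = |r| := one_mul _

/-- The coordinatewise quantization `f : ℓ∞(S) → ℓ∞(S)`, `f(x)(γ) = [x(γ)]`. -/
def quant (x : Linf Γ) : Linf Γ :=
  BoundedContinuousFunction.ofNormedAddCommGroup (fun γ => ent (x γ))
    continuous_of_discreteTopology ‖x‖ (fun γ => by
      rw [Real.norm_eq_abs]
      exact (abs_ent_le (x γ)).trans (by simpa using x.norm_coe_le_norm γ))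

/-- Scalar truncation at level `s`. -/
def truncFun (s t : ℝ) : ℝ := if |t| ≤ s then t else s * t / |t|

lemma abs_truncFun_le (s t : ℝ) : |truncFun s t| ≤ max |s| |t| := by
  unfold truncFun
  split_ifs with h
  · exact le_max_right _ _
  · by_cases ht : t = 0
    · simp [ht]
    · have hst : abs (s * t / |t|) = |s| := by
        rw [abs_div, abs_mul, abs_abs, mul_div_assoc, div_self (abs_ne_zero.mpr ht), mul_one]
      rw [hst]; exact le_max_left _ _

/-- The truncation of radius `s`: `T_s(x)(γ) = x(γ)` if `|x(γ)| ≤ s`,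
and `= s·x(γ)/|x(γ)|` otherwise. -/
def trunc (s : ℝ) (x : Linf Γ) : Linf Γ :=
  BoundedContinuousFunction.ofNormedAddCommGroup (fun γ => truncFun s (x γ))
    continuous_of_discreteTopology (max |s| ‖x‖) (fun γ => by
      rw [Real.norm_eq_abs]
      exact (abs_truncFun_le s (x γ)).trans
        (max_le_max le_rfl (by simpa using x.norm_coe_le_norm γ)))

/-- The restriction operator `r_S : ℓ∞(Γ) → ℓ∞(S)`, where `ℓ∞(S)` is identified
isometrically with the subspace of `ℓ∞(Γ)` of functions vanishing off `S`. -/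
def restr (S : Set Γ) (x : Linf Γ) : Linf Γ :=
  BoundedContinuousFunction.ofNormedAddCommGroup (S.indicator x)
    continuous_of_discreteTopology ‖x‖ (fun γ => by
      rw [Real.norm_eq_abs]
      by_cases h : γ ∈ S
      · rw [Set.indicator_of_mem h]
        simpa using x.norm_coe_le_norm γ
      · rw [Set.indicator_of_notMem h]
        simp)

/-- The ball `s·B_{ℓ∞(S)}`, viewed inside `ℓ∞(Γ)`: functions supported on `S`
of norm at most `s`. -/
def suppBall (S : Set Γ) (s : ℝ) : Set (Linf Γ) :=
  {x | (∀ γ ∉ S, x γ = 0) ∧ ‖x‖ ≤ s}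

/-- `chain T a b = T (a+1) ∘ ⋯ ∘ T b` (the identity if `b ≤ a`). -/
def chain {α : Type*} (T : ℕ → α → α) (a b : ℕ) : α → α :=
  Nat.rec id (fun k ih => ih ∘ T (a + k + 1)) (b - a)

/-- Bourgain–Delbaen data on `Γ`: a strictly increasing sequence of nonempty finite
sets `Γs n` (for `n ≥ 1`) with union `Γ`, together with compatible bounded linear
extension operators `i n : ℓ∞(Γ_n) → ℓ∞(Γ)` (realized as operators on `ℓ∞(Γ)`
factoring through the restriction `restr (Γs n)`), with norms bounded by the
positive integer `lam`. -/
structure BD (Γ : Type*) [TopologicalSpace Γ] [DiscreteTopology Γ] where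
  Γs : ℕ → Set Γ
  lam : ℕ
  i : ℕ → Linf Γ →L[ℝ] Linf Γ
  one_le_lam : 1 ≤ lam
  finite : ∀ n, 1 ≤ n → (Γs n).Finite
  nonempty : ∀ n, 1 ≤ n → (Γs n).Nonempty
  ssubset : ∀ n, 1 ≤ n → Γs n ⊂ Γs (n + 1)
  iUnion_eq : ⋃ n ∈ {k : ℕ | 1 ≤ k}, Γs n = Set.univ
  extension : ∀ n, 1 ≤ n → ∀ x : Linf Γ, ∀ γ ∈ Γs n, i n x γ = x γ
  factor : ∀ n, 1 ≤ n → ∀ x : Linf Γ, i n (restr (Γs n) x) = i n x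
  compatible : ∀ n m, 1 ≤ n → n < m → ∀ x : Linf Γ, i m (restr (Γs m) (i n x)) = i n x
  norm_i_le : ∀ n, 1 ≤ n → ‖i n‖ ≤ (lam : ℝ)

namespace BD

/-- `s n = λ^n`. -/
def s (B : BD Γ) (n : ℕ) : ℝ := (B.lam : ℝ) ^ n

/-- The sets `M_n` (with `M_0 = ∅`):
`M_n = M_{n-1} ∪ (f ∘ i_n)(f(s_n B_{ℓ∞(Γ_n)}) \ r_n(M_{n-1}))`. -/
def M (B : BD Γ) : ℕ → Set (Linf Γ)
  | 0 => ∅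
  | n + 1 =>
      M B n ∪
        (fun z => quant (B.i (n + 1) z)) ''
          (quant '' suppBall (B.Γs (n + 1)) (B.s (n + 1)) \ restr (B.Γs (n + 1)) '' M B n)

/-- `M = ⋃ n, M_n`. -/
def Mtot (B : BD Γ) : Set (Linf Γ) := ⋃ n, B.M n

/-- `C_n = (f ∘ i_{n+1} ∘ f ∘ T_{s_{n+1}} ∘ r_{n+1} ∘ i_n)
(f(s_{n+1}B_{ℓ∞(Γ_n)}) \ f(s_n B_{ℓ∞(Γ_n)}))`. -/
def C (B : BD Γ) (n : ℕ) : Set (Linf Γ) :=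
  (fun z => quant (B.i (n + 1) (quant (trunc (B.s (n + 1)) (restr (B.Γs (n + 1)) (B.i n z)))))) ''
    (quant '' suppBall (B.Γs n) (B.s (n + 1)) \ quant '' suppBall (B.Γs n) (B.s n))

/-- `D_n = M_n ∪ C_n`. -/
def D (B : BD Γ) (n : ℕ) : Set (Linf Γ) := B.M n ∪ B.C n

end BD

section Aux
variable {Γ : Type*} [TopologicalSpace Γ] [DiscreteTopology Γ]

lemma quant_apply (x : Linf Γ) (γ : Γ) : quant x γ = ent (x γ) := rfl
lemma trunc_apply (s : ℝ) (x : Linf Γ) (γ : Γ) : trunc s x γ = truncFun s (x γ) := rfl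
lemma restr_apply (S : Set Γ) (x : Linf Γ) (γ : Γ) : restr S x γ = S.indicator x γ := rfl

lemma ent_intCast (k : ℤ) : ent (k : ℝ) = k := by
  unfold ent
  rcases lt_trichotomy k 0 with h | h | h
  · rw [Real.sign_of_neg (by exact_mod_cast h), abs_of_neg (by exact_mod_cast h : (k:ℝ) < 0)]
    rw [show (-(k:ℝ)) = ((-k : ℤ) : ℝ) by push_cast; ring, Int.floor_intCast]
    push_cast; ring
  · simp [h]
  · rw [Real.sign_of_pos (by exact_mod_cast h), abs_of_pos (by exact_mod_cast h : (0:ℝ) < k),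
      Int.floor_intCast]
    ring

lemma exists_int_ent (r : ℝ) : ∃ k : ℤ, ent r = k := by
  unfold ent
  rcases lt_trichotomy r 0 with h | h | h
  · exact ⟨-⌊|r|⌋, by rw [Real.sign_of_neg h]; push_cast; ring⟩
  · exact ⟨0, by simp [h]⟩
  · exact ⟨⌊|r|⌋, by rw [Real.sign_of_pos h]; ring⟩

lemma ent_ent (r : ℝ) : ent (ent r) = ent r := by
  obtain ⟨k, hk⟩ := exists_int_ent r
  rw [hk, ent_intCast]

lemma truncFun_eq_self {s t : ℝ} (h : |t| ≤ s) : truncFun s t = t := if_pos h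

lemma abs_truncFun_le' {s : ℝ} (hs : 0 ≤ s) (t : ℝ) : |truncFun s t| ≤ s := by
  unfold truncFun
  split_ifs with h
  · exact h
  · push_neg at h
    have ht : t ≠ 0 := by intro h0; rw [h0] at h; simp at h; linarith
    have : abs (s * t / |t|) = s := by
      rw [abs_div, abs_mul, abs_abs, mul_div_assoc, div_self (abs_ne_zero.mpr ht),
        mul_one, abs_of_nonneg hs]
    rw [this]

lemma truncFun_truncFun {s t : ℝ} (hs : 0 ≤ s) (hst : s ≤ t) (r : ℝ) :
    truncFun s (truncFun t r) = truncFun s r := by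
  by_cases h : |r| ≤ t
  · rw [truncFun_eq_self h]
  · push_neg at h
    have hr0 : r ≠ 0 := by intro h0; rw [h0] at h; simp at h; linarith
    have hval : truncFun t r = t * r / |r| := if_neg (not_le.mpr h)
    have habs : abs (t * r / |r|) = t := by
      rw [abs_div, abs_mul, abs_abs, mul_div_assoc, div_self (abs_ne_zero.mpr hr0),
        mul_one, abs_of_nonneg (hs.trans hst)]
    rw [hval]
    have hrs : ¬ |r| ≤ s := not_le.mpr (lt_of_le_of_lt hst h)
    by_cases hts : t ≤ s
    · have hseqt : s = t := le_antisymm hst hts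
      rw [truncFun_eq_self (by rw [habs]; exact hts)]
      rw [truncFun, if_neg hrs, hseqt]
    · push_neg at hts
      have ht0 : t ≠ 0 := (hs.trans_lt hts).ne'
      rw [truncFun, if_neg (by rw [habs]; exact not_le.mpr hts), habs]
      rw [truncFun, if_neg hrs]
      field_simp

lemma norm_le_of_forall {f : Linf Γ} {C : ℝ} (hC : 0 ≤ C) (h : ∀ γ, |f γ| ≤ C) : ‖f‖ ≤ C :=
  (BoundedContinuousFunction.norm_le hC).mpr (fun γ => by rw [Real.norm_eq_abs]; exact h γ)

lemma abs_apply_le_norm (f : Linf Γ) (γ : Γ) : |f γ| ≤ ‖f‖ := by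
  have := f.norm_coe_le_norm γ; rwa [Real.norm_eq_abs] at this

lemma trunc_eq_self {s : ℝ} {x : Linf Γ} (h : ∀ γ, |x γ| ≤ s) : trunc s x = x :=
  BoundedContinuousFunction.ext fun γ => truncFun_eq_self (h γ)

lemma norm_trunc_le {s : ℝ} (hs : 0 ≤ s) (x : Linf Γ) : ‖trunc s x‖ ≤ s :=
  norm_le_of_forall hs fun γ => abs_truncFun_le' hs (x γ)

lemma trunc_trunc {s t : ℝ} (hs : 0 ≤ s) (hst : s ≤ t) (x : Linf Γ) :
    trunc s (trunc t x) = trunc s x :=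
  BoundedContinuousFunction.ext fun γ => truncFun_truncFun hs hst (x γ)

lemma trunc_congr {s a : ℝ} (x : Linf Γ) (hs : 0 ≤ s) (hsa : s ≤ a)
    (h : ∀ γ, |truncFun a (x γ)| ≤ s) : trunc a x = trunc s x := by
  refine BoundedContinuousFunction.ext fun γ => ?_
  rw [trunc_apply, trunc_apply]
  by_cases hγ : |x γ| ≤ s
  · rw [truncFun_eq_self (hγ.trans hsa), truncFun_eq_self hγ]
  · push_neg at hγ
    have hxa : ¬ |x γ| ≤ a := by
      intro hle
      have hh := h γ
      rw [truncFun_eq_self hle] at hh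
      exact absurd hh (not_le.mpr hγ)
    have hx0 : x γ ≠ 0 := by intro h0; rw [h0] at hγ; simp at hγ; linarith
    have habs : |truncFun a (x γ)| = a := by
      rw [truncFun, if_neg hxa, abs_div, abs_mul, abs_abs, mul_div_assoc,
        div_self (abs_ne_zero.mpr hx0), mul_one, abs_of_nonneg (hs.trans hsa)]
    have has : a = s := le_antisymm (habs ▸ h γ) hsa
    rw [has]

end Aux
section Struct
variable {Γ : Type*} [TopologicalSpace Γ] [DiscreteTopology Γ]

lemma norm_quant_le (x : Linf Γ) : ‖quant x‖ ≤ ‖x‖ :=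
  norm_le_of_forall (norm_nonneg x) fun γ => (abs_ent_le _).trans (abs_apply_le_norm x γ)

lemma one_le_s (B : BD Γ) (n : ℕ) : 1 ≤ B.s n :=
  one_le_pow₀ (by exact_mod_cast B.one_le_lam)

lemma s_nonneg (B : BD Γ) (n : ℕ) : 0 ≤ B.s n := le_trans zero_le_one (one_le_s B n)

lemma M_bound (B : BD Γ) : ∀ m, ∀ x ∈ B.M m, ∀ n, m ≤ n → ∀ γ ∈ B.Γs n, |x γ| ≤ B.s n := by
  intro m
  induction m with
  | zero => intro x hx; exact absurd hx (by simp [BD.M])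
  | succ m IH =>
    intro x hx n hmn γ hγ
    rcases hx with hx | hx
    · exact IH x hx n (by omega) γ hγ
    · obtain ⟨z, ⟨hz1, _⟩, rfl⟩ := hx
      obtain ⟨y, ⟨hy_supp, hy_norm⟩, rfl⟩ := hz1
      have hq : ‖quant y‖ ≤ B.s (m+1) := (norm_quant_le y).trans hy_norm
      rcases eq_or_lt_of_le hmn with heq | hlt
      · subst heq
        rw [quant_apply, B.extension (m+1) (by omega) _ γ hγ]
        exact (abs_ent_le _).trans ((abs_apply_le_norm _ γ).trans hq)
      · rw [quant_apply]
        refine (abs_ent_le _).trans ((abs_apply_le_norm _ γ).trans ?_)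
        calc ‖B.i (m+1) (quant y)‖ ≤ ‖B.i (m+1)‖ * ‖quant y‖ := (B.i (m+1)).le_opNorm _
          _ ≤ (B.lam : ℝ) * B.s (m+1) :=
              mul_le_mul (B.norm_i_le (m+1) (by omega)) hq (norm_nonneg _)
                (by exact_mod_cast Nat.zero_le _)
          _ = B.s (m+2) := by rw [BD.s, BD.s, pow_succ]; ring
          _ ≤ B.s n := pow_le_pow_right₀ (by exact_mod_cast B.one_le_lam) (by omega)

lemma M_restr_bound (B : BD Γ) {n : ℕ} {x : Linf Γ} (hx : x ∈ B.M n) (γ : Γ) :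
    |restr (B.Γs n) x γ| ≤ B.s n := by
  rw [restr_apply]
  by_cases hγ : γ ∈ B.Γs n
  · rw [Set.indicator_of_mem hγ]; exact M_bound B n x hx n le_rfl γ hγ
  · rw [Set.indicator_of_notMem hγ]; simpa using s_nonneg B n

lemma C_restr (B : BD Γ) {n : ℕ} (hn : 1 ≤ n) {x : Linf Γ} (hx : x ∈ B.C n) :
    B.s n + 1 ≤ ‖restr (B.Γs n) x‖ := by
  obtain ⟨z, ⟨hz1, hz2⟩, rfl⟩ := hx
  obtain ⟨y, ⟨hy_supp, hy_norm⟩, rfl⟩ := hz1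
  have hzint : ∀ γ, ∃ k : ℤ, quant y γ = k := fun γ => exists_int_ent (y γ)
  have hzsupp : ∀ γ ∉ B.Γs n, quant y γ = 0 := fun γ hγ => by
    rw [quant_apply, hy_supp γ hγ]; simp [ent]
  have key : restr (B.Γs n)
      (quant (B.i (n+1) (quant (trunc (B.s (n+1)) (restr (B.Γs (n+1)) (B.i n (quant y)))))))
      = quant y := by
    refine BoundedContinuousFunction.ext fun γ => ?_
    rw [restr_apply]
    by_cases hγ : γ ∈ B.Γs n
    · rw [Set.indicator_of_mem hγ, quant_apply]
      have hγ' : γ ∈ B.Γs (n+1) := (B.ssubset n hn).subset hγ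
      rw [B.extension (n+1) (by omega) _ γ hγ', quant_apply, trunc_apply, restr_apply,
        Set.indicator_of_mem hγ', B.extension n hn _ γ hγ]
      have hle : |quant y γ| ≤ B.s (n+1) :=
        (abs_ent_le _).trans ((abs_apply_le_norm y γ).trans hy_norm)
      rw [truncFun_eq_self hle]
      obtain ⟨k, hk⟩ := hzint γ
      rw [hk, ent_intCast, ent_intCast]
    · rw [Set.indicator_of_notMem hγ, hzsupp γ hγ]
  rw [key]
  by_contra hcon
  push_neg at hcon
  apply hz2
  have hball : ∀ γ, |quant y γ| ≤ B.s n := by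
    intro γ
    obtain ⟨k, hk⟩ := hzint γ
    have h1 : |quant y γ| < B.s n + 1 := lt_of_le_of_lt (abs_apply_le_norm _ γ) hcon
    rw [hk] at h1 ⊢
    have h3 : ((|k| : ℤ) : ℝ) < ((B.lam : ℤ)^n : ℝ) + 1 := by
      push_cast
      simpa [BD.s] using h1
    have h2 : |k| ≤ (B.lam : ℤ)^n := Int.lt_add_one_iff.mp (by exact_mod_cast h3)
    calc |(k:ℝ)| = ((|k| : ℤ) : ℝ) := by push_cast; rfl
      _ ≤ (((B.lam : ℤ)^n : ℤ) : ℝ) := by exact_mod_cast h2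
      _ = B.s n := by rw [BD.s]; push_cast; rfl
  refine ⟨quant y, ⟨hzsupp, norm_le_of_forall (s_nonneg B n) hball⟩, ?_⟩
  refine BoundedContinuousFunction.ext fun γ => ?_
  rw [quant_apply, quant_apply, ent_ent]

lemma M_C_disjoint (B : BD Γ) {n : ℕ} (hn : 1 ≤ n) {x : Linf Γ} (hx : x ∈ B.M n) :
    x ∉ B.C n := by
  intro hC
  have h1 := C_restr B hn hC
  have h2 : ‖restr (B.Γs n) x‖ ≤ B.s n :=
    norm_le_of_forall (s_nonneg B n) (M_restr_bound B hx)
  linarith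

end Struct
/-- Proposition (Step 4): `φ_{n,0} = T_{n,1} ∘ ⋯ ∘ T_{n,c(n)}` equals the restriction
to `D_n` of `φ_n = (r_n|_{M_n})⁻¹ ∘ T_{s_n} ∘ r_n` (encoded by membership in `M_n`
together with the defining identity for `r_n ∘ φ_n`). -/
theorem phi_n_zero_eq (B : BD Γ) (n : ℕ) (hn : 1 ≤ n)
    (N : ℕ) (c : ℕ → Linf Γ)
    (hc_inj : Set.InjOn c (Set.Icc 1 N))
    (hc_range : c '' Set.Icc 1 N = B.C n)
    (hc_mono : ∀ i j, 1 ≤ i → i ≤ j → j ≤ N →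
      ‖restr (B.Γs n) (c i)‖ ≤ ‖restr (B.Γs n) (c j)‖)
    (T : ℕ → Linf Γ → Linf Γ)
    (hT_val : ∀ i, 1 ≤ i → i ≤ N → T i (c i) ∈ B.D n ∧
      restr (B.Γs n) (T i (c i)) =
        trunc (‖restr (B.Γs n) (c i)‖ - 1) (restr (B.Γs n) (c i)))
    (hT_id : ∀ i, 1 ≤ i → i ≤ N →
      ∀ z ∈ B.M n ∪ c '' Set.Icc 1 i, z ≠ c i → T i z = z)
    : ∀ x ∈ B.D n,
      chain T 0 N x ∈ B.M n ∧
      restr (B.Γs n) (chain T 0 N x) = trunc (B.s n) (restr (B.Γs n) x) := by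
  have hsn1 : (1:ℝ) ≤ B.s n := one_le_s B n
  have hs0 : (0:ℝ) ≤ B.s n := s_nonneg B n
  have hcC : ∀ i, 1 ≤ i → i ≤ N → c i ∈ B.C n := by
    intro i h1 h2
    rw [← hc_range]
    exact ⟨i, ⟨h1, h2⟩, rfl⟩
  have hchain : ∀ b, chain T 0 (b+1) = chain T 0 b ∘ T (b+1) := fun b => by simp [chain]
  have hMfix : ∀ b, b ≤ N → ∀ x ∈ B.M n, chain T 0 b x = x := by
    intro b
    induction b with
    | zero => intro _ x _; rfl
    | succ b IH =>
      intro hb x hx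
      have hne : x ≠ c (b+1) := by
        intro h
        exact M_C_disjoint B hn hx (h ▸ hcC (b+1) (by omega) hb)
      rw [hchain b, Function.comp_apply, hT_id (b+1) (by omega) hb x (Or.inl hx) hne]
      exact IH (by omega) x hx
  have hcfix : ∀ k, 1 ≤ k → k ≤ N → ∀ b, k ≤ b → b ≤ N →
      chain T 0 b (c k) = chain T 0 k (c k) := by
    intro k hk1 hkN b
    induction b with
    | zero => intro h _; exact absurd h (by omega)
    | succ b IH =>
      intro hkb hbN
      rcases eq_or_lt_of_le hkb with heq | hlt
      · rw [heq]
      · have hne : c k ≠ c (b+1) := fun h =>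
          absurd (hc_inj ⟨hk1, hkN⟩ ⟨by omega, hbN⟩ h) (by omega)
        rw [hchain b, Function.comp_apply,
          hT_id (b+1) (by omega) hbN (c k) (Or.inr ⟨k, ⟨hk1, by omega⟩, rfl⟩) hne]
        exact IH (by omega) (by omega)
  have hP : ∀ j, 1 ≤ j → j ≤ N → chain T 0 j (c j) ∈ B.M n ∧
      restr (B.Γs n) (chain T 0 j (c j)) = trunc (B.s n) (restr (B.Γs n) (c j)) := by
    intro j
    induction j using Nat.strong_induction_on with
    | _ j IH =>
    intro hj1 hjN
    obtain ⟨j', rfl⟩ : ∃ j', j = j' + 1 := ⟨j - 1, by omega⟩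
    obtain ⟨hyD, hyR⟩ := hT_val (j'+1) hj1 hjN
    have hmlb : B.s n + 1 ≤ ‖restr (B.Γs n) (c (j'+1))‖ := C_restr B hn (hcC (j'+1) hj1 hjN)
    have hch : chain T 0 (j'+1) (c (j'+1)) = chain T 0 j' (T (j'+1) (c (j'+1))) := by
      rw [hchain j']; rfl
    rcases hyD with hyM | hyC
    · rw [hch, hMfix j' (by omega) _ hyM]
      refine ⟨hyM, ?_⟩
      rw [hyR]
      refine trunc_congr _ hs0 (by linarith) (fun γ => ?_)
      have h := M_restr_bound B hyM γ
      rw [hyR, trunc_apply] at h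
      exact h
    · rw [← hc_range] at hyC
      obtain ⟨k, hk, hky⟩ := hyC
      have hknorm : ‖restr (B.Γs n) (c k)‖ ≤ ‖restr (B.Γs n) (c (j'+1))‖ - 1 := by
        rw [hky, hyR]; exact norm_trunc_le (by linarith) _
      have hkj : k < j'+1 := by
        by_contra hcon
        push_neg at hcon
        have := hc_mono (j'+1) k hj1 hcon hk.2
        linarith
      have hstep : chain T 0 (j'+1) (c (j'+1)) = chain T 0 k (c k) := by
        rw [hch, ← hky, hcfix k hk.1 hk.2 j' (by omega) (by omega)]
      obtain ⟨hMem, hEq⟩ := IH k hkj hk.1 hk.2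
      refine ⟨by rw [hstep]; exact hMem, ?_⟩
      rw [hstep, hEq, hky, hyR, trunc_trunc hs0 (by linarith)]
  intro x hx
  rcases hx with hxM | hxC
  · rw [hMfix N le_rfl x hxM]
    exact ⟨hxM, (trunc_eq_self (M_restr_bound B hxM)).symm⟩
  · rw [← hc_range] at hxC
    obtain ⟨k, hk, rfl⟩ := hxC
    rw [hcfix k hk.1 hk.2 N hk.2 le_rfl]
    exact hP k hk.1 hk.2
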